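/- Let H be a Hopf algebra over a field k with antipode S, M an H-tetramodule, and f : M → H an H-bimodule map which is a coderivation. Then the restriction f̃ of f to the left-invariants ⁱⁿᵛM := {m ∈ M : m₍₋₁₎ ⊗ m₍₀₎ = 1 ⊗ m} takes values in ker ε and is equivariant for the right adjoint actions: f̃(S(h₍₁₎) m h₍₂₎) = S(h₍₁₎) f̃(m) h₍₂₎ for all m ∈ ⁱⁿᵛM and h ∈ H; together with the right-colinearity of f̃ (with respect to the right coaction of M on ⁱⁿᵛM and the coaction Δ̃(h) = h₍₁₎ ⊗ h₍₂₎ − 1 ⊗ h on ker ε) this makes f̃ : ⁱⁿᵛM → ker ε a morphism of Yetter–Drinfel'd modules over H. -/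

import Mathlib

open TensorProduct LinearMap

section Defs

variable (k H M : Type) [Field k] [Ring H] [HopfAlgebra k H]
  [AddCommGroup M] [Module k M]

/-- The right adjoint action `m ⊗ h ↦ S(h₍₁₎) m h₍₂₎` on an `H`-bimodule `M` with
left action `lact` and right action `ract`. -/
noncomputable def adActM (lact : H ⊗[k] M →ₗ[k] M) (ract : M ⊗[k] H →ₗ[k] M) :
    M ⊗[k] H →ₗ[k] M :=
  ract
  ∘ₗ (rTensor H (lact ∘ₗ (TensorProduct.comm k M H).toLinearMap))
  ∘ₗ (TensorProduct.assoc k M H H).symm.toLinearMap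
  ∘ₗ (lTensor M (rTensor H (HopfAlgebra.antipode (R := k))))
  ∘ₗ (lTensor M (Coalgebra.comul (R := k)))

/-- The right adjoint action `g ⊗ h ↦ S(h₍₁₎) g h₍₂₎` of `H` on itself. -/
noncomputable def adActH : H ⊗[k] H →ₗ[k] H :=
  adActM k H H (LinearMap.mul' k H) (LinearMap.mul' k H)

/-- Diagonal left `H`-action on `H ⊗ M`: `g ⊗ (a ⊗ m) ↦ g₍₁₎a ⊗ g₍₂₎m`. -/
noncomputable def diagLHM (lact : H ⊗[k] M →ₗ[k] M) :
    H ⊗[k] (H ⊗[k] M) →ₗ[k] H ⊗[k] M :=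
  (TensorProduct.map (LinearMap.mul' k H) lact)
  ∘ₗ (TensorProduct.tensorTensorTensorComm k H H H M).toLinearMap
  ∘ₗ (rTensor (H ⊗[k] M) (Coalgebra.comul (R := k)))

/-- Diagonal right `H`-action on `H ⊗ M`: `(a ⊗ m) ⊗ g ↦ ag₍₁₎ ⊗ mg₍₂₎`. -/
noncomputable def diagRHM (ract : M ⊗[k] H →ₗ[k] M) :
    (H ⊗[k] M) ⊗[k] H →ₗ[k] H ⊗[k] M :=
  (TensorProduct.map (LinearMap.mul' k H) ract)
  ∘ₗ (TensorProduct.tensorTensorTensorComm k H M H H).toLinearMap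
  ∘ₗ (lTensor (H ⊗[k] M) (Coalgebra.comul (R := k)))

/-- Diagonal left `H`-action on `M ⊗ H`: `g ⊗ (m ⊗ a) ↦ g₍₁₎m ⊗ g₍₂₎a`. -/
noncomputable def diagLMH (lact : H ⊗[k] M →ₗ[k] M) :
    H ⊗[k] (M ⊗[k] H) →ₗ[k] M ⊗[k] H :=
  (TensorProduct.map lact (LinearMap.mul' k H))
  ∘ₗ (TensorProduct.tensorTensorTensorComm k H H M H).toLinearMap
  ∘ₗ (rTensor (M ⊗[k] H) (Coalgebra.comul (R := k)))

/-- Diagonal right `H`-action on `M ⊗ H`: `(m ⊗ a) ⊗ g ↦ mg₍₁₎ ⊗ ag₍₂₎`. -/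
noncomputable def diagRMH (ract : M ⊗[k] H →ₗ[k] M) :
    (M ⊗[k] H) ⊗[k] H →ₗ[k] M ⊗[k] H :=
  (TensorProduct.map ract (LinearMap.mul' k H))
  ∘ₗ (TensorProduct.tensorTensorTensorComm k M H H H).toLinearMap
  ∘ₗ (lTensor (M ⊗[k] H) (Coalgebra.comul (R := k)))

end Defs

section Aux

open Coalgebra HopfAlgebra

variable {k H : Type} [Field k] [Ring H] [HopfAlgebra k H]

/-- Convolution product of linear maps `H → B`. -/
noncomputable def conv {B : Type} [Ring B] [Algebra k B] (f g : H →ₗ[k] B) : H →ₗ[k] B :=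
  LinearMap.mul' k B ∘ₗ TensorProduct.map f g ∘ₗ Coalgebra.comul

lemma conv_repr {B : Type} [Ring B] [Algebra k B] (f g : H →ₗ[k] B) (a : H)
    (r : Coalgebra.Repr k a (H × H)) :
    conv f g a = ∑ i ∈ r.index, f (r.left i) * g (r.right i) := by
  unfold conv
  rw [comp_apply, comp_apply, ← r.eq]
  simp [map_sum]

lemma conv_assoc {B : Type} [Ring B] [Algebra k B] (f g h : H →ₗ[k] B) :
    conv (conv f g) h = conv f (conv g h) := by
  ext a
  set r := ℛ k a
  set a₁ : (i : H × H) → Coalgebra.Repr k (r.left i) (H × H) := fun i => ℛ k (r.left i)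
  set a₂ : (i : H × H) → Coalgebra.Repr k (r.right i) (H × H) := fun i => ℛ k (r.right i)
  have key := Coalgebra.sum_map_tmul_tmul_eq f g h a (repr := r) (a₁ := a₁) (a₂ := a₂)
  have key2 := congrArg (LinearMap.mul' k B ∘ₗ lTensor B (LinearMap.mul' k B)) key
  simp only [map_sum, comp_apply, lTensor_tmul, mul'_apply] at key2
  rw [conv_repr (conv f g) h a r, conv_repr f (conv g h) a r]
  calc ∑ i ∈ r.index, conv f g (r.left i) * h (r.right i)
      = ∑ i ∈ r.index, ∑ j ∈ (a₁ i).index,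
          f ((a₁ i).left j) * (g ((a₁ i).right j) * h (r.right i)) := by
        refine Finset.sum_congr rfl fun i _ => ?_
        rw [conv_repr f g _ (a₁ i), Finset.sum_mul]
        exact Finset.sum_congr rfl fun j _ => mul_assoc _ _ _
    _ = ∑ i ∈ r.index, ∑ j ∈ (a₂ i).index,
          f (r.left i) * (g ((a₂ i).left j) * h ((a₂ i).right j)) := key2.symm
    _ = ∑ i ∈ r.index, f (r.left i) * conv g h (r.right i) := by
        refine Finset.sum_congr rfl fun i _ => ?_
        rw [conv_repr g h _ (a₂ i), Finset.mul_sum]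

lemma conv_unit_left {B : Type} [Ring B] [Algebra k B] (f : H →ₗ[k] B) :
    conv ((Algebra.linearMap k B) ∘ₗ Coalgebra.counit) f = f := by
  ext a
  set r := ℛ k a
  rw [conv_repr _ f a r]
  have h1 := Coalgebra.sum_counit_tmul_eq (R := k) r
  have h2 := congrArg (f ∘ₗ (TensorProduct.lid k H).toLinearMap) h1
  simp only [map_sum, comp_apply, LinearEquiv.coe_coe, lid_tmul, one_smul, map_smul] at h2
  calc ∑ i ∈ r.index, (Algebra.linearMap k B ∘ₗ Coalgebra.counit) (r.left i) * f (r.right i)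
      = ∑ i ∈ r.index, Coalgebra.counit (R := k) (r.left i) • f (r.right i) := by
        refine Finset.sum_congr rfl fun i _ => ?_
        simp [Algebra.smul_def]
    _ = f a := h2

/-- `x ↦ x ⊗ 1`. -/
noncomputable def iota1 : H →ₗ[k] H ⊗[k] H := (TensorProduct.mk k H H).flip 1

/-- `x ↦ 1 ⊗ S x`. -/
noncomputable def iota2S : H →ₗ[k] H ⊗[k] H :=
  TensorProduct.mk k H H 1 ∘ₗ HopfAlgebra.antipode (R := k)

/-- `Δ ∘ S`. -/
noncomputable def deltaS : H →ₗ[k] H ⊗[k] H :=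
  Coalgebra.comul ∘ₗ HopfAlgebra.antipode (R := k)

lemma step1 : conv (deltaS (k := k) (H := H)) Coalgebra.comul
    = Algebra.linearMap k (H ⊗[k] H) ∘ₗ Coalgebra.counit := by
  ext a
  set r := ℛ k a
  rw [conv_repr _ _ a r]
  calc ∑ i ∈ r.index, deltaS (k := k) (r.left i) * Coalgebra.comul (r.right i)
      = ∑ i ∈ r.index,
          Coalgebra.comul (R := k) (HopfAlgebra.antipode (R := k) (r.left i) * r.right i) := by
        refine Finset.sum_congr rfl fun i _ => ?_
        rw [Bialgebra.comul_mul]; rfl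
    _ = Coalgebra.comul (R := k)
          (∑ i ∈ r.index, HopfAlgebra.antipode (R := k) (r.left i) * r.right i) := by
        rw [map_sum]
    _ = Algebra.linearMap k (H ⊗[k] H) (Coalgebra.counit a) := by
        rw [HopfAlgebra.sum_antipode_mul_eq_algebraMap_counit r]
        simp [Algebra.algebraMap_eq_smul_one]

lemma step2 : conv (Coalgebra.comul (R := k) (A := H)) iota2S = iota1 := by
  ext a
  set r := ℛ k a
  set la : (i : H × H) → Coalgebra.Repr k (r.left i) (H × H) := fun i => ℛ k (r.left i)
  set ra : (i : H × H) → Coalgebra.Repr k (r.right i) (H × H) := fun i => ℛ k (r.right i)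
  have key := Coalgebra.sum_tmul_tmul_eq r la ra
  have key2 := congrArg
    (lTensor H (LinearMap.mul' k H ∘ₗ lTensor H (HopfAlgebra.antipode (R := k)))) key
  simp only [map_sum, lTensor_tmul, comp_apply, mul'_apply] at key2
  rw [conv_repr _ _ a r]
  calc ∑ i ∈ r.index, Coalgebra.comul (R := k) (r.left i) * iota2S (r.right i)
      = ∑ i ∈ r.index, ∑ j ∈ (la i).index,
          (la i).left j ⊗ₜ[k] ((la i).right j
            * HopfAlgebra.antipode (R := k) (r.right i)) := by
        refine Finset.sum_congr rfl fun i _ => ?_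
        rw [← (la i).eq, Finset.sum_mul]
        refine Finset.sum_congr rfl fun j _ => ?_
        simp [iota2S, Algebra.TensorProduct.tmul_mul_tmul]
    _ = ∑ i ∈ r.index, ∑ j ∈ (ra i).index,
          r.left i ⊗ₜ[k] ((ra i).left j
            * HopfAlgebra.antipode (R := k) ((ra i).right j)) := key2
    _ = ∑ i ∈ r.index,
          Coalgebra.counit (R := k) (r.right i) • (r.left i ⊗ₜ[k] (1 : H)) := by
        refine Finset.sum_congr rfl fun i _ => ?_
        rw [← tmul_sum, HopfAlgebra.sum_mul_antipode_eq_algebraMap_counit (ra i)]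
        simp [Algebra.algebraMap_eq_smul_one, tmul_smul]
    _ = a ⊗ₜ[k] (1 : H) := by
        have h1 := Coalgebra.sum_tmul_counit_eq (R := k) r
        have h2 := congrArg ((TensorProduct.rid k H).toLinearMap) h1
        simp only [map_sum, LinearEquiv.coe_coe, rid_tmul] at h2
        calc ∑ i ∈ r.index, Coalgebra.counit (R := k) (r.right i) • (r.left i ⊗ₜ[k] (1 : H))
            = (∑ i ∈ r.index, Coalgebra.counit (R := k) (r.right i) • r.left i)
                ⊗ₜ[k] (1 : H) := by
              rw [sum_tmul]
              exact Finset.sum_congr rfl fun i _ => by rw [smul_tmul']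
          _ = a ⊗ₜ[k] (1 : H) := by rw [h2, one_smul]

lemma key_conv : conv (deltaS (k := k) (H := H)) iota1 = iota2S := by
  rw [← step2, ← conv_assoc, step1, conv_unit_left]

/-- The key Hopf identity `∑ Δ(S a₁) (a₂ ⊗ 1) = 1 ⊗ S a`. -/
lemma key_hopf (a : H) (r : Coalgebra.Repr k a (H × H)) :
    ∑ i ∈ r.index, Coalgebra.comul (R := k) (HopfAlgebra.antipode (R := k) (r.left i))
        * (r.right i ⊗ₜ[k] (1 : H))
      = (1 : H) ⊗ₜ[k] HopfAlgebra.antipode (R := k) a := by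
  have := LinearMap.congr_fun (key_conv (k := k) (H := H)) a
  rw [conv_repr _ _ a r] at this
  simpa [deltaS, iota1, iota2S] using this

/-- `X ⊗ z ↦ X * (z ⊗ 1)` on `(H ⊗ H) ⊗ H`. -/
noncomputable def nuMap : (H ⊗[k] H) ⊗[k] H →ₗ[k] H ⊗[k] H :=
  LinearMap.mul' k (H ⊗[k] H) ∘ₗ lTensor (H ⊗[k] H) ((TensorProduct.mk k H H).flip 1)

/-- `a ⊗ (z ⊗ w) ↦ assoc ((Δ(S a) * (z ⊗ 1)) ⊗ w)`. -/
noncomputable def lambdaMap : H ⊗[k] (H ⊗[k] H) →ₗ[k] H ⊗[k] (H ⊗[k] H) :=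
  (TensorProduct.assoc k H H H).toLinearMap
  ∘ₗ rTensor H (nuMap (k := k) (H := H))
  ∘ₗ (TensorProduct.assoc k (H ⊗[k] H) H H).symm.toLinearMap
  ∘ₗ rTensor (H ⊗[k] H) (Coalgebra.comul (R := k) ∘ₗ HopfAlgebra.antipode (R := k))

lemma lambdaMap_tmul (a z w : H) :
    lambdaMap (k := k) (a ⊗ₜ[k] (z ⊗ₜ[k] w))
      = (TensorProduct.assoc k H H H)
          ((Coalgebra.comul (R := k) (HopfAlgebra.antipode (R := k) a) * (z ⊗ₜ[k] (1 : H)))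
            ⊗ₜ[k] w) := by
  unfold lambdaMap nuMap
  simp [mul'_apply]

lemma key2 (h : H) (r : Coalgebra.Repr k h (H × H))
    (s : (i : H × H) → Coalgebra.Repr k (HopfAlgebra.antipode (R := k) (r.left i)) (H × H))
    (r2 : (i : H × H) → Coalgebra.Repr k (r.right i) (H × H)) :
    ∑ i ∈ r.index, ∑ j ∈ (s i).index, ∑ x ∈ (r2 i).index,
        ((s i).left j * (r2 i).left x) ⊗ₜ[k] ((s i).right j ⊗ₜ[k] (r2 i).right x)
      = ∑ i ∈ r.index,
          (1 : H) ⊗ₜ[k] (HopfAlgebra.antipode (R := k) (r.left i) ⊗ₜ[k] r.right i) := by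
  set la : (i : H × H) → Coalgebra.Repr k (r.left i) (H × H) := fun i => ℛ k (r.left i)
  have E1 := Coalgebra.sum_tmul_tmul_eq r la r2
  have E2 := congrArg (lambdaMap (k := k) (H := H)) E1
  simp only [map_sum, lambdaMap_tmul] at E2
  calc ∑ i ∈ r.index, ∑ j ∈ (s i).index, ∑ x ∈ (r2 i).index,
          ((s i).left j * (r2 i).left x) ⊗ₜ[k] ((s i).right j ⊗ₜ[k] (r2 i).right x)
      = ∑ i ∈ r.index, ∑ x ∈ (r2 i).index,
          (TensorProduct.assoc k H H H)
            ((Coalgebra.comul (R := k) (HopfAlgebra.antipode (R := k) (r.left i))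
                * ((r2 i).left x ⊗ₜ[k] (1 : H))) ⊗ₜ[k] (r2 i).right x) := by
        refine Finset.sum_congr rfl fun i _ => ?_
        rw [Finset.sum_comm]
        refine Finset.sum_congr rfl fun x _ => ?_
        rw [show Coalgebra.comul (R := k) (HopfAlgebra.antipode (R := k) (r.left i))
            = ∑ j ∈ (s i).index, (s i).left j ⊗ₜ[k] (s i).right j from (s i).eq.symm,
          Finset.sum_mul, sum_tmul, map_sum]
        refine Finset.sum_congr rfl fun j _ => ?_
        simp [Algebra.TensorProduct.tmul_mul_tmul]
    _ = ∑ i ∈ r.index, ∑ j ∈ (la i).index,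
          (TensorProduct.assoc k H H H)
            ((Coalgebra.comul (R := k) (HopfAlgebra.antipode (R := k) ((la i).left j))
                * ((la i).right j ⊗ₜ[k] (1 : H))) ⊗ₜ[k] r.right i) := E2.symm
    _ = ∑ i ∈ r.index,
          (1 : H) ⊗ₜ[k] (HopfAlgebra.antipode (R := k) (r.left i) ⊗ₜ[k] r.right i) := by
        refine Finset.sum_congr rfl fun i _ => ?_
        rw [← map_sum, ← sum_tmul]
        rw [key_hopf (r.left i) (la i)]
        simp

variable {M : Type} [AddCommGroup M] [Module k M]

lemma adActM_repr (lact : H ⊗[k] M →ₗ[k] M) (ract : M ⊗[k] H →ₗ[k] M)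
    (m : M) (h : H) (r : Coalgebra.Repr k h (H × H)) :
    adActM k H M lact ract (m ⊗ₜ h)
      = ∑ i ∈ r.index,
          ract (lact (HopfAlgebra.antipode (R := k) (r.left i) ⊗ₜ m) ⊗ₜ r.right i) := by
  unfold adActM
  simp only [coe_comp, Function.comp_apply, LinearEquiv.coe_coe, lTensor_tmul]
  rw [show Coalgebra.comul (R := k) h = CoalgebraStruct.comul (R := k) h from rfl, ← r.eq]
  simp [map_sum, tmul_sum]

lemma lamB (lact : H ⊗[k] M →ₗ[k] M) (ract : M ⊗[k] H →ₗ[k] M)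
    (lam : M →ₗ[k] H ⊗[k] M)
    (hcl_r : lam ∘ₗ ract = diagRHM k H M ract ∘ₗ rTensor H lam)
    (n : M) (b : H) {ι : Type*} (s : Finset ι) (u : ι → H) (v : ι → M)
    (hn : lam n = ∑ j ∈ s, u j ⊗ₜ v j) (rb : Coalgebra.Repr k b (H × H)) :
    lam (ract (n ⊗ₜ b))
      = ∑ j ∈ s, ∑ x ∈ rb.index, (u j * rb.left x) ⊗ₜ[k] ract (v j ⊗ₜ rb.right x) := by
  have := LinearMap.congr_fun hcl_r (n ⊗ₜ[k] b)
  simp only [coe_comp, Function.comp_apply, rTensor_tmul] at this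
  rw [this, hn]
  unfold diagRHM
  simp only [coe_comp, Function.comp_apply, LinearEquiv.coe_coe, sum_tmul, map_sum,
    lTensor_tmul]
  refine Finset.sum_congr rfl fun j _ => ?_
  rw [show Coalgebra.comul (R := k) b = CoalgebraStruct.comul (R := k) b from rfl, ← rb.eq]
  simp [map_sum, tmul_sum]

lemma lamC (lact : H ⊗[k] M →ₗ[k] M)
    (lam : M →ₗ[k] H ⊗[k] M)
    (hcl_l : lam ∘ₗ lact = diagLHM k H M lact ∘ₗ lTensor H lam)
    (m : M) (hm : lam m = (1 : H) ⊗ₜ[k] m) (a : H) (ra : Coalgebra.Repr k a (H × H)) :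
    lam (lact (a ⊗ₜ m))
      = ∑ i ∈ ra.index, ra.left i ⊗ₜ[k] lact (ra.right i ⊗ₜ m) := by
  have := LinearMap.congr_fun hcl_l (a ⊗ₜ[k] m)
  simp only [coe_comp, Function.comp_apply, lTensor_tmul] at this
  rw [this, hm]
  unfold diagLHM
  simp only [coe_comp, Function.comp_apply, LinearEquiv.coe_coe, rTensor_tmul]
  rw [show Coalgebra.comul (R := k) a = CoalgebraStruct.comul (R := k) a from rfl, ← ra.eq]
  simp [map_sum, sum_tmul]

end Aux

/-- Let `H` be a Hopf algebra, `M` an `H`-tetramodule and `f : M → H`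
an `H`-bimodule map which is a coderivation.  Then the restriction of `f` to the
left-invariants `ⁱⁿᵛM = {m : m₍₋₁₎ ⊗ m₍₀₎ = 1 ⊗ m}` takes values in `ker ε`, is
equivariant for the right adjoint actions, and is right `H`-colinear; together this
makes `f̃ : ⁱⁿᵛM → ker ε` a morphism of Yetter–Drinfel'd modules over `H`. -/


theorem stmt12 (k H M : Type) [Field k] [Ring H] [HopfAlgebra k H]
    [AddCommGroup M] [Module k M]
    (lact : H ⊗[k] M →ₗ[k] M) (ract : M ⊗[k] H →ₗ[k] M)
    (lam : M →ₗ[k] H ⊗[k] M) (ρ : M →ₗ[k] M ⊗[k] H)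
    -- M is an H-bimodule
    (h_lact_one : ∀ m : M, lact ((1 : H) ⊗ₜ m) = m)
    (h_lact_mul : ∀ (a b : H) (m : M), lact (a ⊗ₜ lact (b ⊗ₜ m)) = lact ((a * b) ⊗ₜ m))
    (h_ract_one : ∀ m : M, ract (m ⊗ₜ (1 : H)) = m)
    (h_ract_mul : ∀ (m : M) (a b : H), ract (ract (m ⊗ₜ a) ⊗ₜ b) = ract (m ⊗ₜ (a * b)))
    (h_commute : ∀ (a : H) (m : M) (b : H),
      ract (lact (a ⊗ₜ m) ⊗ₜ b) = lact (a ⊗ₜ ract (m ⊗ₜ b)))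
    -- M is an H-bicomodule
    (hl_counit : ∀ m : M,
      (TensorProduct.lid k M) ((rTensor M (Coalgebra.counit (R := k))) (lam m)) = m)
    (hl_coassoc : ∀ m : M,
      (TensorProduct.assoc k H H M) ((rTensor M (Coalgebra.comul (R := k))) (lam m))
        = (lTensor H lam) (lam m))
    (hr_counit : ∀ m : M,
      (TensorProduct.rid k M) ((lTensor M (Coalgebra.counit (R := k))) (ρ m)) = m)
    (hr_coassoc : ∀ m : M,
      (TensorProduct.assoc k M H H) ((rTensor H ρ) (ρ m))
        = (lTensor M (Coalgebra.comul (R := k))) (ρ m))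
    (hbicompat : ∀ m : M,
      (TensorProduct.assoc k H M H) ((rTensor H lam) (ρ m)) = (lTensor H ρ) (lam m))
    -- the coactions are bimodule maps (M is a tetramodule)
    (hcl_l : lam ∘ₗ lact = diagLHM k H M lact ∘ₗ lTensor H lam)
    (hcl_r : lam ∘ₗ ract = diagRHM k H M ract ∘ₗ rTensor H lam)
    (hcr_l : ρ ∘ₗ lact = diagLMH k H M lact ∘ₗ lTensor H ρ)
    (hcr_r : ρ ∘ₗ ract = diagRMH k H M ract ∘ₗ rTensor H ρ)
    -- f is an H-bimodule map and a coderivation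
    (f : M →ₗ[k] H)
    (h_fl : ∀ (a : H) (m : M), f (lact (a ⊗ₜ m)) = a * f m)
    (h_fr : ∀ (m : M) (a : H), f (ract (m ⊗ₜ a)) = f m * a)
    (hf : ∀ m : M,
      Coalgebra.comul (R := k) (f m) = (lTensor H f) (lam m) + (rTensor H f) (ρ m)) :
    -- f̃ takes values in ker ε
    (∀ m : M, lam m = (1 : H) ⊗ₜ[k] m → Coalgebra.counit (R := k) (f m) = 0) ∧
    -- the adjoint action preserves the left-invariants
    (∀ (m : M) (h : H), lam m = (1 : H) ⊗ₜ[k] m →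
      lam (adActM k H M lact ract (m ⊗ₜ h))
        = (1 : H) ⊗ₜ[k] adActM k H M lact ract (m ⊗ₜ h)) ∧
    -- f̃ is equivariant for the right adjoint actions
    (∀ (m : M) (h : H), lam m = (1 : H) ⊗ₜ[k] m →
      f (adActM k H M lact ract (m ⊗ₜ h)) = adActH k H (f m ⊗ₜ h)) ∧
    -- f̃ is right H-colinear
    (∀ m : M, lam m = (1 : H) ⊗ₜ[k] m →
      Coalgebra.comul (R := k) (f m) - (1 : H) ⊗ₜ[k] f m = (rTensor H f) (ρ m)) := by
  refine ⟨?_, ?_, ?_, ?_⟩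
  · -- f takes values in ker ε (true for all m)
    intro m _
    obtain ⟨sl, hsl⟩ := TensorProduct.exists_finset (R := k) (lam m)
    obtain ⟨sr, hsr⟩ := TensorProduct.exists_finset (R := k) (ρ m)
    have hlc : ∑ p ∈ sl, Coalgebra.counit (R := k) p.1 • p.2 = m := by
      have h1 := hl_counit m
      rw [hsl] at h1
      simpa [map_sum] using h1
    have hrc : ∑ q ∈ sr, Coalgebra.counit (R := k) q.2 • q.1 = m := by
      have h1 := hr_counit m
      rw [hsr] at h1
      simpa [map_sum] using h1
    have hcm := hf m
    rw [hsl, hsr] at hcm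
    have happ := congrArg (Coalgebra.counit (R := k)
      ∘ₗ (TensorProduct.lid k H).toLinearMap ∘ₗ rTensor H (Coalgebra.counit (R := k))) hcm
    simp only [map_add, map_sum, coe_comp, Function.comp_apply, LinearEquiv.coe_coe,
      rTensor_tmul, lTensor_tmul, lid_tmul, map_smul, smul_eq_mul] at happ
    rw [Coalgebra.rTensor_counit_comul] at happ
    simp only [lid_tmul, one_smul] at happ
    have e1 : ∑ p ∈ sl, Coalgebra.counit (R := k) p.1 * Coalgebra.counit (R := k) (f p.2)
        = Coalgebra.counit (R := k) (f m) := by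
      conv_rhs => rw [← hlc]
      simp [map_sum, map_smul, smul_eq_mul]
    have e2 : ∑ q ∈ sr, Coalgebra.counit (R := k) (f q.1) * Coalgebra.counit (R := k) q.2
        = Coalgebra.counit (R := k) (f m) := by
      conv_rhs => rw [← hrc]
      simp [map_sum, map_smul, smul_eq_mul, mul_comm]
    rw [e1, e2] at happ
    have h2 : Coalgebra.counit (R := k) (f m) + Coalgebra.counit (R := k) (f m)
        = Coalgebra.counit (R := k) (f m) + 0 := by
      rw [add_zero]; exact happ.symm
    exact add_left_cancel h2
  · -- the adjoint action preserves the left-invariants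
    intro m h hm
    set r : Coalgebra.Repr k h (H × H) := Coalgebra.Repr.arbitrary k h with hrdef
    set s : (i : H × H) → Coalgebra.Repr k (HopfAlgebra.antipode (R := k) (r.left i)) (H × H) :=
      fun i => Coalgebra.Repr.arbitrary k _ with hsdef
    set r2 : (i : H × H) → Coalgebra.Repr k (r.right i) (H × H) := fun i => Coalgebra.Repr.arbitrary k _ with hr2def
    set θ : H ⊗[k] H →ₗ[k] M :=
      ract ∘ₗ rTensor H (lact ∘ₗ (TensorProduct.mk k H M).flip m) with hθdef
    have hθ : ∀ (y w : H), θ (y ⊗ₜ[k] w) = ract (lact (y ⊗ₜ m) ⊗ₜ w) := by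
      intro y w
      simp [hθdef, TensorProduct.mk_apply]
    rw [adActM_repr lact ract m h r, map_sum]
    have hterm : ∀ i ∈ r.index,
        lam (ract (lact (HopfAlgebra.antipode (R := k) (r.left i) ⊗ₜ m) ⊗ₜ r.right i))
          = ∑ j ∈ (s i).index, ∑ x ∈ (r2 i).index,
              ((s i).left j * (r2 i).left x) ⊗ₜ[k]
                ract (lact ((s i).right j ⊗ₜ m) ⊗ₜ (r2 i).right x) := by
      intro i _
      exact lamB lact ract lam hcl_r _ _ (s i).index (s i).left
        (fun j => lact ((s i).right j ⊗ₜ m))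
        (lamC lact lam hcl_l m hm _ (s i)) (r2 i)
    rw [Finset.sum_congr rfl hterm]
    have K := key2 h r s r2
    have K2 := congrArg (lTensor H θ) K
    simp only [map_sum, lTensor_tmul, hθ] at K2
    rw [K2, tmul_sum]
  · -- equivariance for the adjoint actions
    intro m h hm
    set r : Coalgebra.Repr k h (H × H) := Coalgebra.Repr.arbitrary k h
    have hH : adActH k H (f m ⊗ₜ h)
        = ∑ i ∈ r.index, LinearMap.mul' k H
            (LinearMap.mul' k H (HopfAlgebra.antipode (R := k) (r.left i) ⊗ₜ f m)
              ⊗ₜ r.right i) := by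
      unfold adActH
      exact adActM_repr (LinearMap.mul' k H) (LinearMap.mul' k H) (f m) h r
    rw [adActM_repr lact ract m h r, map_sum, hH]
    refine Finset.sum_congr rfl fun i _ => ?_
    rw [h_fr, h_fl]
    simp [mul'_apply]
  · -- right H-colinearity
    intro m hm
    rw [hf m, hm]
    simp only [lTensor_tmul]
    abel
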